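/- For a matrix Φ with unit column vectors u_1,...,u_N (N ≥ 2), the coherence parameter μ = max_{i≠j} |⟨u_i, u_j⟩| equals the smallest δ such that Φ satisfies the RIP of order 2 with parameter δ. -/

import Mathlib

open Finset

/-- `Φ` satisfies the Restricted Isometry Property of order `k` with parameter `δ`. -/
def RIP {m N : Type*} [Fintype m] [Fintype N] [DecidableEq N]
    (Φ : Matrix m N ℂ) (k : ℕ) (δ : ℝ) : Prop :=
  ∀ x : N → ℂ, (Finset.univ.filter fun i => x i ≠ 0).card ≤ k →
    (1 - δ) * ∑ i, ‖x i‖ ^ 2 ≤ ∑ a, ‖Φ.mulVec x a‖ ^ 2 ∧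
      ∑ a, ‖Φ.mulVec x a‖ ^ 2 ≤ (1 + δ) * ∑ i, ‖x i‖ ^ 2


lemma conj_mul_self_eq (z : ℂ) : (starRingEnd ℂ) z * z = ((‖z‖:ℂ)) ^ 2 := by
  rw [Complex.conj_mul']

lemma norm_sq_expand {n N : ℕ} (Φ : Matrix (Fin n) (Fin N) ℂ) (x : Fin N → ℂ) :
    ∑ a, ‖Φ.mulVec x a‖^2 =
    (∑ i, ∑ j, (starRingEnd ℂ) (x i) * x j * ∑ a, (starRingEnd ℂ) (Φ a i) * Φ a j).re := by
  have h1 : ∀ z : ℂ, ‖z‖^2 = ((starRingEnd ℂ) z * z).re := by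
    intro z; rw [conj_mul_self_eq, ← Complex.ofReal_pow, Complex.ofReal_re]
  have key : ∑ a, (starRingEnd ℂ) (Φ.mulVec x a) * Φ.mulVec x a
      = ∑ i, ∑ j, (starRingEnd ℂ) (x i) * x j * ∑ a, (starRingEnd ℂ) (Φ a i) * Φ a j := by
    calc ∑ a, (starRingEnd ℂ) (Φ.mulVec x a) * Φ.mulVec x a
        = ∑ a, ∑ i, ∑ j, (starRingEnd ℂ) (x i) * x j * ((starRingEnd ℂ) (Φ a i) * Φ a j) := by
          refine Finset.sum_congr rfl fun a _ => ?_
          show (starRingEnd ℂ) (∑ i, Φ a i * x i) * (∑ j, Φ a j * x j) = _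
          rw [map_sum, Finset.sum_mul_sum]
          exact Finset.sum_congr rfl fun i _ => Finset.sum_congr rfl fun j _ => by
            rw [map_mul]; ring
      _ = ∑ i, ∑ a, ∑ j, (starRingEnd ℂ) (x i) * x j * ((starRingEnd ℂ) (Φ a i) * Φ a j) :=
          Finset.sum_comm
      _ = ∑ i, ∑ j, ∑ a, (starRingEnd ℂ) (x i) * x j * ((starRingEnd ℂ) (Φ a i) * Φ a j) :=
          Finset.sum_congr rfl fun i _ => Finset.sum_comm
      _ = ∑ i, ∑ j, (starRingEnd ℂ) (x i) * x j * ∑ a, (starRingEnd ℂ) (Φ a i) * Φ a j := by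
          simp [Finset.mul_sum]
  rw [← key, Complex.re_sum]
  exact Finset.sum_congr rfl fun a _ => h1 _

/-- For a matrix with unit columns (N ≥ 2), the coherence parameter
μ = max_{i≠j} |⟨u_i,u_j⟩| is the smallest δ such that Φ satisfies the RIP of order 2
with parameter δ. -/
theorem coherence_eq_rip_order_two {n N : ℕ} (hN : 2 ≤ N)
    (Φ : Matrix (Fin n) (Fin N) ℂ) (μ : ℝ)
    (hunit : ∀ j, ∑ a, ‖Φ a j‖ ^ 2 = 1)
    (hμ : IsGreatest {r : ℝ | ∃ i j : Fin N, i ≠ j ∧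
      r = ‖∑ a, (starRingEnd ℂ) (Φ a i) * Φ a j‖} μ) :
    IsLeast {δ : ℝ | RIP Φ 2 δ} μ := by
  set G : Fin N → Fin N → ℂ := fun i j => ∑ a, (starRingEnd ℂ) (Φ a i) * Φ a j with hG
  have hGdiag : ∀ i, G i i = 1 := by
    intro i
    have h2 : G i i = ((∑ a, ‖Φ a i‖^2 : ℝ) : ℂ) := by
      push_cast
      exact Finset.sum_congr rfl fun a _ => by rw [conj_mul_self_eq]
    rw [h2, hunit i]; norm_num
  have hGsymm : ∀ i j, G j i = (starRingEnd ℂ) (G i j) := by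
    intro i j
    simp only [hG, map_sum, map_mul]
    exact Finset.sum_congr rfl fun a _ => by
      rw [Complex.conj_conj]; ring
  have hGoff : ∀ i j, i ≠ j → ‖G i j‖ ≤ μ := fun i j h => hμ.2 ⟨i, j, h, rfl⟩
  have hμ0 : 0 ≤ μ := by
    obtain ⟨i, j, hij, hr⟩ := hμ.1
    exact hr ▸ norm_nonneg _
  constructor
  · -- μ satisfies RIP of order 2
    intro x hx
    set T := ∑ i, ‖x i‖^2 with hT
    have hT0 : 0 ≤ T := Finset.sum_nonneg fun i _ => by positivity
    set C := (∑ i, ∑ j ∈ univ.erase i, (starRingEnd ℂ) (x i) * x j * G i j).re with hC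
    have hsum : ∑ a, ‖Φ.mulVec x a‖^2 = T + C := by
      rw [norm_sq_expand]
      have hsplit : (∑ i, ∑ j, (starRingEnd ℂ) (x i) * x j * G i j)
          = (↑T) + ∑ i, ∑ j ∈ univ.erase i, (starRingEnd ℂ) (x i) * x j * G i j := by
        have e1 : ∀ i : Fin N, ∑ j, (starRingEnd ℂ) (x i) * x j * G i j
            = (starRingEnd ℂ) (x i) * x i * G i i
              + ∑ j ∈ univ.erase i, (starRingEnd ℂ) (x i) * x j * G i j := by
          intro i
          rw [← Finset.sum_erase_add _ _ (Finset.mem_univ i)]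
          ring
        rw [Finset.sum_congr rfl fun i _ => e1 i, Finset.sum_add_distrib]
        congr 1
        rw [hT]
        push_cast
        exact Finset.sum_congr rfl fun i _ => by
          rw [hGdiag i, mul_one, conj_mul_self_eq]
      rw [hsplit]
      simp only [Complex.add_re, Complex.ofReal_re]
      rfl
    have hDbound : ∑ i, ∑ j ∈ univ.erase i, ‖x i‖ * ‖x j‖ ≤ T := by
      set s := univ.filter fun i => x i ≠ 0 with hs
      have hsub : ∑ i, ‖x i‖ = ∑ i ∈ s, ‖x i‖ := by
        refine (Finset.sum_subset (Finset.subset_univ s) fun i _ hi => ?_).symm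
        simp only [hs, Finset.mem_filter, Finset.mem_univ, true_and, not_not] at hi
        simp [hi]
      have hcs : (∑ i ∈ s, ‖x i‖)^2 ≤ (s.card : ℝ) * ∑ i ∈ s, ‖x i‖^2 :=
        sq_sum_le_card_mul_sum_sq
      have hle : ∑ i ∈ s, ‖x i‖^2 ≤ T :=
        Finset.sum_le_sum_of_subset_of_nonneg (Finset.subset_univ s)
          fun i _ _ => by positivity
      have hcard : (s.card : ℝ) ≤ 2 := by exact_mod_cast hx
      have h2T : (∑ i, ‖x i‖)^2 ≤ 2 * T := by
        rw [hsub]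
        calc (∑ i ∈ s, ‖x i‖)^2 ≤ (s.card : ℝ) * ∑ i ∈ s, ‖x i‖^2 := hcs
          _ ≤ 2 * T := by
            have h0 : 0 ≤ ∑ i ∈ s, ‖x i‖^2 := Finset.sum_nonneg fun i _ => by positivity
            nlinarith
      have hD : ∑ i, ∑ j ∈ univ.erase i, ‖x i‖ * ‖x j‖ = (∑ i, ‖x i‖)^2 - T := by
        have e2 : ∀ i : Fin N, ∑ j ∈ univ.erase i, ‖x i‖ * ‖x j‖
            = ‖x i‖ * (∑ j, ‖x j‖) - ‖x i‖ * ‖x i‖ := by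
          intro i
          have he : (∑ j ∈ univ.erase i, ‖x j‖) = (∑ j, ‖x j‖) - ‖x i‖ := by
            linarith [Finset.sum_erase_add univ (fun j => ‖x j‖) (Finset.mem_univ i)]
          rw [← Finset.mul_sum, he]
          ring
        rw [Finset.sum_congr rfl fun i _ => e2 i, Finset.sum_sub_distrib, ← Finset.sum_mul,
          hT, pow_two]
        congr 1
        exact Finset.sum_congr rfl fun i _ => (pow_two ‖x i‖).symm
      linarith
    have hCbound : |C| ≤ μ * T := by
      have step1 : |C| ≤ ‖∑ i, ∑ j ∈ univ.erase i, (starRingEnd ℂ) (x i) * x j * G i j‖ :=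
        Complex.abs_re_le_norm _
      have step2 : ‖∑ i, ∑ j ∈ univ.erase i, (starRingEnd ℂ) (x i) * x j * G i j‖
          ≤ ∑ i, ∑ j ∈ univ.erase i, ‖x i‖ * ‖x j‖ * μ := by
        refine (norm_sum_le _ _).trans (Finset.sum_le_sum fun i _ => ?_)
        refine (norm_sum_le _ _).trans (Finset.sum_le_sum fun j hj => ?_)
        rw [norm_mul, norm_mul, RCLike.norm_conj]
        have hij : i ≠ j := (Finset.ne_of_mem_erase hj).symm
        exact mul_le_mul_of_nonneg_left (hGoff i j hij) (by positivity)
      have step3 : ∑ i, ∑ j ∈ univ.erase i, ‖x i‖ * ‖x j‖ * μ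
          = μ * ∑ i, ∑ j ∈ univ.erase i, ‖x i‖ * ‖x j‖ := by
        rw [Finset.mul_sum]
        refine Finset.sum_congr rfl fun i _ => ?_
        rw [Finset.mul_sum]
        exact Finset.sum_congr rfl fun j _ => by ring
      have : |C| ≤ μ * ∑ i, ∑ j ∈ univ.erase i, ‖x i‖ * ‖x j‖ := by
        calc |C| ≤ _ := step1
          _ ≤ _ := step2
          _ = _ := step3
      calc |C| ≤ μ * ∑ i, ∑ j ∈ univ.erase i, ‖x i‖ * ‖x j‖ := this
        _ ≤ μ * T := mul_le_mul_of_nonneg_left hDbound hμ0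
    have habs := abs_le.1 hCbound
    constructor
    · rw [hsum]; linarith
    · rw [hsum]; linarith
  · -- μ is a lower bound
    intro δ hδ
    obtain ⟨i, j, hij, hr⟩ := hμ.1
    have hrG : μ = ‖G i j‖ := hr
    set c : ℂ := if G i j = 0 then 1 else (starRingEnd ℂ) (G i j) / ‖G i j‖ with hc
    have hcnorm : ‖c‖ = 1 := by
      rw [hc]
      split_ifs with h
      · simp
      · rw [norm_div, RCLike.norm_conj, Complex.norm_real, Real.norm_eq_abs,
          abs_of_nonneg (norm_nonneg _), div_self (norm_ne_zero_iff.mpr h)]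
    have hcross : c * G i j = (μ : ℂ) := by
      rw [hc, hrG]
      split_ifs with h
      · simp [h]
      · rw [div_mul_eq_mul_div, conj_mul_self_eq]
        rw [pow_two]
        rw [mul_div_assoc]
        rw [div_self (by exact_mod_cast norm_ne_zero_iff.mpr h)]
        ring
    set x : Fin N → ℂ := fun k => if k = i then 1 else if k = j then c else 0 with hx
    have hxi : x i = 1 := by simp [hx]
    have hxj : x j = c := by simp [hx, hij.symm]
    have hxo : ∀ k, k ≠ i → k ≠ j → x k = 0 := fun k h1 h2 => by simp [hx, h1, h2]
    have hsupp : (Finset.univ.filter fun k => x k ≠ 0).card ≤ 2 := by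
      have : (Finset.univ.filter fun k => x k ≠ 0) ⊆ {i, j} := by
        intro k hk
        simp only [Finset.mem_filter] at hk
        by_contra hmem
        simp only [Finset.mem_insert, Finset.mem_singleton, not_or] at hmem
        exact hk.2 (hxo k hmem.1 hmem.2)
      calc _ ≤ ({i, j} : Finset (Fin N)).card := Finset.card_le_card this
        _ ≤ 2 := Finset.card_insert_le _ _ |>.trans (by simp)
    have hTx : ∑ k, ‖x k‖^2 = 2 := by
      rw [← Finset.sum_subset (Finset.subset_univ ({i, j} : Finset (Fin N)))
        (fun k _ hk => ?_)]
      · rw [Finset.sum_pair hij, hxi, hxj, hcnorm]; norm_num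
      · simp only [Finset.mem_insert, Finset.mem_singleton, not_or] at hk
        rw [hxo k hk.1 hk.2]; simp
    have hSx : ∑ a, ‖Φ.mulVec x a‖^2 = 2 + 2 * μ := by
      rw [norm_sq_expand]
      have houter : (∑ i', ∑ j', (starRingEnd ℂ) (x i') * x j' * G i' j')
          = ∑ i' ∈ {i, j}, ∑ j' ∈ {i, j}, (starRingEnd ℂ) (x i') * x j' * G i' j' := by
        rw [← Finset.sum_subset (Finset.subset_univ ({i, j} : Finset (Fin N)))
          (fun k _ hk => ?_)]
        · refine Finset.sum_congr rfl fun i' _ => ?_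
          rw [← Finset.sum_subset (Finset.subset_univ ({i, j} : Finset (Fin N)))
            (fun k _ hk => ?_)]
          simp only [Finset.mem_insert, Finset.mem_singleton, not_or] at hk
          rw [hxo k hk.1 hk.2]; ring
        · simp only [Finset.mem_insert, Finset.mem_singleton, not_or] at hk
          rw [hxo k hk.1 hk.2]
          simp
      rw [houter, Finset.sum_pair hij, Finset.sum_pair hij, Finset.sum_pair hij,
        hxi, hxj, hGdiag i, hGdiag j, hGsymm i j]
      simp only [map_one, one_mul, mul_one]
      rw [hcross, ← map_mul, hcross, Complex.conj_ofReal, conj_mul_self_eq c, hcnorm]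
      push_cast
      simp
      ring
    have := (hδ x hsupp).2
    rw [hSx, hTx] at this
    linarith
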